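/- For any integer n ≥ 3, the greatest common divisor, over all partitions ω = (i_1,...,i_k) of n into positive parts each of size at most n-2, of the numbers α(ω) = (n!/(i_1!···i_k!)) · (i_1+1)^{i_1} ··· (i_k+1)^{i_k}, equals g(n), where g(n) = -48 if n = 3 (so the gcd is 48 for n = 3), g(n) = 2·m(n-1)·m(n-2) if n > 3 is odd, and g(n) = m(n-1)·m(n-2) if n > 3 is even. -/

import Mathlib

open Nat

open Classical in
noncomputable def mCF (i : ℕ) : ℕ :=
  if h : ∃ p : ℕ, p.Prime ∧ ∃ s : ℕ, 0 < s ∧ i + 1 = p ^ s then h.choose else 1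

namespace GcdAlpha

lemma mCF_spec (i : ℕ) (h : ∃ p : ℕ, p.Prime ∧ ∃ s : ℕ, 0 < s ∧ i + 1 = p ^ s) :
    (mCF i).Prime ∧ ∃ s : ℕ, 0 < s ∧ i + 1 = (mCF i) ^ s := by
  unfold mCF
  rw [dif_pos h]
  exact h.choose_spec

lemma mCF_eq {i p s : ℕ} (hp : p.Prime) (hs : 0 < s) (h : i + 1 = p ^ s) : mCF i = p := by
  obtain ⟨hq, t, ht, hqt⟩ := mCF_spec i ⟨p, hp, s, hs, h⟩
  have h1 : mCF i ∣ p ^ s := by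
    rw [← h, hqt]
    exact dvd_pow_self (mCF i) ht.ne'
  exact (Nat.prime_dvd_prime_iff_eq hq hp).mp (hq.dvd_of_dvd_pow h1)

lemma mCF_eq_one {i : ℕ} (h : ¬ ∃ p : ℕ, p.Prime ∧ ∃ s : ℕ, 0 < s ∧ i + 1 = p ^ s) :
    mCF i = 1 := by
  unfold mCF
  rw [dif_neg h]

def Ffac (ω : Multiset ℕ) : ℕ := (ω.map Nat.factorial).prod
def Pprod (ω : Multiset ℕ) : ℕ := (ω.map fun i => (i + 1) ^ i).prod
def mult (ω : Multiset ℕ) : ℕ := (ω.sum)! / Ffac ω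

lemma Ffac_pos (ω : Multiset ℕ) : 0 < Ffac ω := by
  unfold Ffac
  induction ω using Multiset.induction with
  | empty => simp
  | cons a s ih =>
    simp only [Multiset.map_cons, Multiset.prod_cons]
    exact Nat.mul_pos (factorial_pos a) ih

lemma Pprod_pos (ω : Multiset ℕ) (h : ∀ x ∈ ω, 0 < x) : 0 < Pprod ω := by
  unfold Pprod
  induction ω using Multiset.induction with
  | empty => simp
  | cons a s ih =>
    simp only [Multiset.map_cons, Multiset.prod_cons]
    exact Nat.mul_pos (Nat.pow_pos (Nat.succ_pos a)) (ih fun x hx => h x (Multiset.mem_cons_of_mem hx))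

lemma Ffac_dvd (ω : Multiset ℕ) : Ffac ω ∣ (ω.sum)! := by
  induction ω using Multiset.induction with
  | empty => simp [Ffac]
  | cons a s ih =>
    have h1 : Ffac (a ::ₘ s) = a ! * Ffac s := by simp [Ffac]
    rw [h1, Multiset.sum_cons]
    calc a ! * Ffac s ∣ a ! * (s.sum)! := mul_dvd_mul_left _ ih
    _ ∣ (a + s.sum)! := Nat.factorial_mul_factorial_dvd_factorial_add _ _

lemma mult_mul_Ffac (ω : Multiset ℕ) : mult ω * Ffac ω = (ω.sum)! :=
  Nat.div_mul_cancel (Ffac_dvd ω)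

lemma mult_pos (ω : Multiset ℕ) : 0 < mult ω := by
  have := mult_mul_Ffac ω
  rcases Nat.eq_zero_or_pos (mult ω) with h | h
  · rw [h, zero_mul] at this; exact absurd this.symm (factorial_ne_zero _)
  · exact h

lemma mult_cons (i : ℕ) (ω : Multiset ℕ) :
    mult (i ::ₘ ω) = (i + ω.sum).choose i * mult ω := by
  have hF : Ffac (i ::ₘ ω) = i ! * Ffac ω := by simp [Ffac]
  have hs : (i ::ₘ ω).sum = i + ω.sum := Multiset.sum_cons i ω
  have key : ((i + ω.sum).choose i * mult ω) * Ffac (i ::ₘ ω) = ((i ::ₘ ω).sum)! := by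
    rw [hF, hs]
    have h2 := mult_mul_Ffac ω
    have h3 : (i + ω.sum).choose i * i ! * (ω.sum)! = (i + ω.sum)! := by
      have := Nat.choose_mul_factorial_mul_factorial (Nat.le_add_right i ω.sum)
      simpa [Nat.add_sub_cancel_left] using this
    calc (i + ω.sum).choose i * mult ω * (i ! * Ffac ω)
        = (i + ω.sum).choose i * i ! * (mult ω * Ffac ω) := by ring
      _ = (i + ω.sum).choose i * i ! * (ω.sum)! := by rw [h2]
      _ = (i + ω.sum)! := h3
  have := mult_mul_Ffac (i ::ₘ ω)
  have hFpos := Ffac_pos (i ::ₘ ω)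
  exact Nat.eq_of_mul_eq_mul_right hFpos (this.trans key.symm)


lemma choose_dvd_mult_of_mem {x : ℕ} {ω : Multiset ℕ} (hx : x ∈ ω) :
    (ω.sum).choose x ∣ mult ω := by
  obtain ⟨t, rfl⟩ := Multiset.exists_cons_of_mem hx
  rw [mult_cons, Multiset.sum_cons]
  exact Dvd.intro _ rfl

lemma pow_dvd_Pprod_of_mem {x : ℕ} {ω : Multiset ℕ} (hx : x ∈ ω) :
    (x + 1) ^ x ∣ Pprod ω := by
  obtain ⟨t, rfl⟩ := Multiset.exists_cons_of_mem hx
  simp only [Pprod, Multiset.map_cons, Multiset.prod_cons]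
  exact Dvd.intro _ rfl

lemma two_dvd_pow_of_odd {x : ℕ} (hx : Odd x) : 2 ∣ (x + 1) ^ x := by
  have h1 : 2 ∣ x + 1 := by obtain ⟨k, rfl⟩ := hx; omega
  exact dvd_pow h1 (by rintro rfl; simp at hx)

lemma four_dvd_Pprod_cons_cons {x y : ℕ} (t : Multiset ℕ) (hx : Odd x) (hy : Odd y) :
    4 ∣ Pprod (x ::ₘ y ::ₘ t) := by
  simp only [Pprod, Multiset.map_cons, Multiset.prod_cons]
  have : (4 : ℕ) = 2 * 2 := rfl
  rw [this, ← mul_assoc]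
  exact (mul_dvd_mul (two_dvd_pow_of_odd hx) (two_dvd_pow_of_odd hy)).trans
    ((dvd_mul_right _ _) : (x + 1) ^ x * (y + 1) ^ y ∣ _)


lemma padic_prod (p : ℕ) [Fact p.Prime] (s : Multiset ℕ) (h : ∀ x ∈ s, x ≠ 0) :
    padicValNat p s.prod = (s.map (padicValNat p)).sum := by
  induction s using Multiset.induction with
  | empty => simp
  | cons a t ih =>
    simp only [Multiset.prod_cons, Multiset.map_cons, Multiset.sum_cons]
    rw [padicValNat.mul (h a (Multiset.mem_cons_self a t))
      (Multiset.prod_ne_zero fun h0 => (h 0 (Multiset.mem_cons_of_mem h0)) rfl),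
      ih fun x hx => h x (Multiset.mem_cons_of_mem hx)]

/-- digit partition: parts `p^j` with multiplicity = the `j`-th digit of `n` base `p`. -/
def Dp (p : ℕ) : ℕ → Multiset ℕ
  | 0 => 0
  | (n + 1) =>
    if hp : 2 ≤ p then
      have : (n + 1) / p < n + 1 := Nat.div_lt_self (Nat.succ_pos n) (by omega)
      Multiset.replicate ((n + 1) % p) 1 + (Dp p ((n + 1) / p)).map (p * ·)
    else 0

lemma Dp_zero (p : ℕ) : Dp p 0 = 0 := by rw [Dp]

lemma Dp_eq (p n : ℕ) (hp : 2 ≤ p) (hn : n ≠ 0) :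
    Dp p n = Multiset.replicate (n % p) 1 + (Dp p (n / p)).map (p * ·) := by
  obtain ⟨m, rfl⟩ := Nat.exists_eq_succ_of_ne_zero hn
  rw [Dp, dif_pos hp]

lemma Dp_sum (p : ℕ) (hp : 2 ≤ p) : ∀ n, (Dp p n).sum = n := by
  intro n
  induction n using Nat.strong_induction_on with
  | _ n ih =>
    rcases Nat.eq_zero_or_pos n with rfl | hn
    · simp [Dp_zero]
    · rw [Dp_eq p n hp hn.ne']
      rw [Multiset.sum_add, Multiset.sum_replicate, smul_eq_mul, mul_one]
      rw [Multiset.sum_map_mul_left]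
      simp only [Multiset.map_id']
      rw [ih (n / p) (Nat.div_lt_self hn (by omega))]
      have := Nat.mod_add_div n p
      omega

lemma Dp_mem (p : ℕ) (hp : 2 ≤ p) : ∀ n, ∀ x ∈ Dp p n, ∃ j, x = p ^ j := by
  intro n
  induction n using Nat.strong_induction_on with
  | _ n ih =>
    rcases Nat.eq_zero_or_pos n with rfl | hn
    · simp [Dp_zero]
    · rw [Dp_eq p n hp hn.ne']
      intro x hx
      rcases Multiset.mem_add.mp hx with h | h
      · exact ⟨0, by simpa using (Multiset.eq_of_mem_replicate h)⟩
      · obtain ⟨y, hy, rfl⟩ := Multiset.mem_map.mp h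
        obtain ⟨j, rfl⟩ := ih (n / p) (Nat.div_lt_self hn (by omega)) y hy
        exact ⟨j + 1, by ring⟩

lemma Dp_pos_mem (p : ℕ) (hp : 2 ≤ p) (n : ℕ) (x : ℕ) (hx : x ∈ Dp p n) : 0 < x := by
  obtain ⟨j, rfl⟩ := Dp_mem p hp n x hx
  exact Nat.pow_pos (by omega)

lemma Dp_one_not_mem (p : ℕ) (hp : 2 ≤ p) (n : ℕ) (hpn : n % p = 0) : 1 ∉ Dp p n := by
  rcases Nat.eq_zero_or_pos n with rfl | hn
  · simp [Dp_zero]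
  · rw [Dp_eq p n hp hn.ne', hpn]
    intro h
    rcases Multiset.mem_add.mp h with h | h
    · simp at h
    · obtain ⟨y, hy, hxy⟩ := Multiset.mem_map.mp h
      have := Dp_pos_mem p hp _ y hy
      nlinarith

lemma Dp_vF (p : ℕ) (hp : p.Prime) : ∀ n, padicValNat p (Ffac (Dp p n)) = padicValNat p (n !) := by
  haveI : Fact p.Prime := ⟨hp⟩
  intro n
  induction n using Nat.strong_induction_on with
  | _ n ih =>
    rcases Nat.eq_zero_or_pos n with rfl | hn
    · simp [Dp_zero, Ffac]
    · rw [Dp_eq p n hp.two_le hn.ne']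
      have hdiv : n / p < n := Nat.div_lt_self hn hp.one_lt
      -- Ffac of sum
      have hF : Ffac (Multiset.replicate (n % p) 1 + (Dp p (n / p)).map (p * ·)) =
          ((Dp p (n / p)).map fun t => (p * t)!).prod := by
        simp only [Ffac, Multiset.map_add, Multiset.prod_add, Multiset.map_map]
        have : (Multiset.replicate (n % p) 1).map Nat.factorial =
            Multiset.replicate (n % p) 1 := by
          rw [Multiset.map_replicate]; rfl
        rw [this, Multiset.prod_replicate, one_pow, one_mul]
        rfl
      rw [hF, padic_prod p _ (by
        intro x hx
        obtain ⟨y, hy, rfl⟩ := Multiset.mem_map.mp hx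
        exact factorial_ne_zero _), Multiset.map_map]
      have hcong : (Dp p (n / p)).map (padicValNat p ∘ fun t => (p * t)!) =
          (Dp p (n / p)).map fun t => padicValNat p (t !) + t :=
        Multiset.map_congr rfl fun t _ => padicValNat_factorial_mul t
      rw [hcong, Multiset.sum_map_add]
      have h1 : ((Dp p (n / p)).map fun t => padicValNat p (t !)).sum =
          padicValNat p (Ffac (Dp p (n / p))) := by
        rw [Ffac, padic_prod p _ (by
          intro x hx
          obtain ⟨y, hy, rfl⟩ := Multiset.mem_map.mp hx
          exact factorial_ne_zero _), Multiset.map_map]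
        rfl
      have h2 : ((Dp p (n / p)).map fun t => t).sum = n / p := by
        rw [Multiset.map_id']; exact Dp_sum p hp.two_le (n / p)
      rw [h1, h2, ih (n / p) hdiv, ← padicValNat_factorial_mul (n / p),
        padicValNat_mul_div_factorial n]

lemma Dp_mult_val (p : ℕ) (hp : p.Prime) (n : ℕ) :
    padicValNat p (mult (Dp p n)) = 0 := by
  haveI : Fact p.Prime := ⟨hp⟩
  have h := mult_mul_Ffac (Dp p n)
  rw [Dp_sum p hp.two_le] at h
  have hv := congrArg (padicValNat p) h
  rw [padicValNat.mul (mult_pos _).ne' (Ffac_pos _).ne', Dp_vF p hp n] at hv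
  omega


lemma val_choose_pow (p : ℕ) (hp : p.Prime) (s : ℕ) (hs : 1 ≤ s) :
    padicValNat p ((p ^ s).choose (p ^ (s - 1))) = 1 := by
  haveI : Fact p.Prime := ⟨hp⟩
  have hle : p ^ (s - 1) ≤ p ^ s := Nat.pow_le_pow_right hp.pos (by omega)
  have hne : p ^ (s - 1) ≠ 0 := (Nat.pow_pos hp.pos).ne'
  have H := Nat.Prime.emultiplicity_choose_prime_pow_add_emultiplicity hp hle hne
  rw [Nat.Prime.emultiplicity_pow_self hp,
    ← padicValNat_eq_emultiplicity (Nat.choose_pos hle).ne'] at H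
  have : ((padicValNat p ((p ^ s).choose (p ^ (s - 1))) + (s - 1) : ℕ) : ℕ∞) = (s : ℕ∞) := by
    push_cast
    exact_mod_cast H
  have h2 : padicValNat p ((p ^ s).choose (p ^ (s - 1))) + (s - 1) = s := by exact_mod_cast this
  omega


lemma lowA {p n : ℕ} (hp : p.Prime) {s : ℕ} (hn : n = p ^ s) (hn2 : 2 ≤ n) (ω : Multiset ℕ)
    (hsum : ω.sum = n) (hparts : ∀ x ∈ ω, 0 < x ∧ x ≤ n - 2) :
    p ∣ mult ω := by
  have hne : ω ≠ 0 := by rintro rfl; simp at hsum; omega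
  obtain ⟨x, hx⟩ := Multiset.exists_mem_of_ne_zero hne
  have h1 := choose_dvd_mult_of_mem hx
  rw [hsum] at h1
  have hx1 := (hparts x hx).1
  have hx2 := (hparts x hx).2
  refine dvd_trans ?_ h1
  rw [hn]
  exact Nat.Prime.dvd_choose_pow hp (by omega) (by rw [← hn]; omega)

lemma lowB {p n : ℕ} (hp : p.Prime) {s : ℕ} (hs : 0 < s) (hn : n - 1 = p ^ s) (hn4 : 4 ≤ n)
    (ω : Multiset ℕ) (hsum : ω.sum = n) (hparts : ∀ x ∈ ω, 0 < x ∧ x ≤ n - 2) :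
    p ∣ mult ω := by
  by_cases hex : ∃ x ∈ ω, 2 ≤ x
  · obtain ⟨x, hx, hx2⟩ := hex
    have h1 := choose_dvd_mult_of_mem hx
    rw [hsum] at h1
    refine dvd_trans ?_ h1
    have hn' : n = p ^ s + 1 := by omega
    obtain ⟨y, rfl⟩ : ∃ y, x = y + 1 := ⟨x - 1, by omega⟩
    have hxle := (hparts _ hx).2
    rw [hn', Nat.choose_succ_succ']
    apply dvd_add
    · exact Nat.Prime.dvd_choose_pow hp (by omega) (by omega)
    · exact Nat.Prime.dvd_choose_pow hp (by omega) (by omega)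
  · push_neg at hex
    have hF : Ffac ω = 1 := by
      apply Multiset.prod_eq_one
      intro y hy
      obtain ⟨x, hx, rfl⟩ := Multiset.mem_map.mp hy
      have h1 := (hparts x hx).1
      have h2 := hex x hx
      have : x = 1 := by omega
      rw [this]; rfl
    have hm : mult ω = n ! := by rw [mult, hF, hsum, Nat.div_one]
    rw [hm]
    have hple : p ≤ n := by
      have := Nat.le_self_pow hs.ne' p
      omega
    exact Nat.dvd_factorial hp.pos hple

lemma odd_mem_of_odd_sum {ω : Multiset ℕ} (h : ω.sum % 2 = 1) : ∃ x ∈ ω, x % 2 = 1 := by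
  induction ω using Multiset.induction with
  | empty => simp at h
  | cons a t ih =>
    rw [Multiset.sum_cons] at h
    by_cases ha : a % 2 = 1
    · exact ⟨a, Multiset.mem_cons_self a t, ha⟩
    · obtain ⟨x, hxt, hx⟩ := ih (by omega)
      exact ⟨x, Multiset.mem_cons_of_mem hxt, hx⟩

lemma two_dvd_P {ω : Multiset ℕ} (h : ω.sum % 2 = 1) : 2 ∣ Pprod ω := by
  obtain ⟨x, hx, hox⟩ := odd_mem_of_odd_sum h
  exact (two_dvd_pow_of_odd (Nat.odd_iff.mpr hox)).trans (pow_dvd_Pprod_of_mem hx)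

lemma lowD {t n : ℕ} (ht : 2 ≤ t) (hn : n = 2 ^ t + 1) (ω : Multiset ℕ)
    (hsum : ω.sum = n) (hparts : ∀ x ∈ ω, 0 < x ∧ x ≤ n - 2) :
    4 ∣ mult ω * Pprod ω := by
  have h2t : 4 ≤ 2 ^ t := by calc (4:ℕ) = 2 ^ 2 := rfl
                                  _ ≤ 2 ^ t := Nat.pow_le_pow_right (by norm_num) ht
  by_cases h3 : ∃ x ∈ ω, x % 2 = 1 ∧ 3 ≤ x
  · obtain ⟨x, hx, hox, hx3⟩ := h3
    have h2 : 2 ∣ x + 1 := by omega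
    have h4 : (4:ℕ) ∣ (x + 1) ^ x := by
      calc (4:ℕ) = 2 ^ 2 := rfl
        _ ∣ 2 ^ x := pow_dvd_pow 2 (by omega)
        _ ∣ (x + 1) ^ x := pow_dvd_pow_of_dvd h2 x
    exact Dvd.dvd.mul_left (h4.trans (pow_dvd_Pprod_of_mem hx)) (mult ω)
  · push_neg at h3
    have hodd1 : ∀ x ∈ ω, x % 2 = 1 → x = 1 := by
      intro x hx hox
      have := h3 x hx hox
      have := (hparts x hx).1
      omega
    have hnodd : ω.sum % 2 = 1 := by
      rw [hsum, hn]
      have : 2 ^ t % 2 = 0 := by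
        have : (2:ℕ) ∣ 2 ^ t := dvd_pow_self 2 (by omega)
        omega
      omega
    obtain ⟨o, ho, hoo⟩ := odd_mem_of_odd_sum hnodd
    have ho1 : o = 1 := hodd1 o ho hoo
    subst ho1
    by_cases hc2 : 2 ≤ ω.count 1
    · have hle : Multiset.replicate 2 1 ≤ ω := Multiset.le_count_iff_replicate_le.mp hc2
      obtain ⟨u, hu⟩ := Multiset.le_iff_exists_add.mp hle
      have hωeq : ω = 1 ::ₘ 1 ::ₘ u := by
        rw [hu, show Multiset.replicate 2 1 = (1 ::ₘ 1 ::ₘ 0 : Multiset ℕ) from rfl]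
        simp [Multiset.cons_add]
      rw [hωeq]
      exact Dvd.dvd.mul_left (four_dvd_Pprod_cons_cons u odd_one odd_one) _
    · obtain ⟨rest, hrest⟩ := Multiset.exists_cons_of_mem ho
      have h1nr : 1 ∉ rest := by
        intro hc
        rw [hrest, Multiset.count_cons_self] at hc2
        have := Multiset.count_pos.mpr hc
        omega
      have hre : ∀ x ∈ rest, x % 2 = 0 := by
        intro x hxr
        have hxω : x ∈ ω := hrest ▸ Multiset.mem_cons_of_mem hxr
        by_contra hxe
        have : x = 1 := hodd1 x hxω (by omega)
        exact h1nr (this ▸ hxr)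
      have hrsum : rest.sum = 2 ^ t := by
        rw [hrest, Multiset.sum_cons] at hsum
        omega
      have hrne : rest ≠ 0 := by
        rintro rfl
        simp at hrsum
        omega
      obtain ⟨x, hxr⟩ := Multiset.exists_mem_of_ne_zero hrne
      have hxω : x ∈ ω := hrest ▸ Multiset.mem_cons_of_mem hxr
      have hd1 : 2 ∣ mult rest := by
        refine dvd_trans ?_ (choose_dvd_mult_of_mem hxr)
        rw [hrsum]
        have hb := (hparts x hxω).2
        have ha := (hparts x hxω).1
        exact Nat.Prime.dvd_choose_pow Nat.prime_two (by omega) (by omega)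
      have hd2 : mult rest ∣ mult ω := by
        rw [hrest, mult_cons]
        exact dvd_mul_left _ _
      have hd3 : 2 ∣ Pprod ω := by
        have := pow_dvd_Pprod_of_mem ho
        simpa using this
      have : (4:ℕ) = 2 * 2 := rfl
      rw [this]
      exact mul_dvd_mul (hd1.trans hd2) hd3


lemma lower {n : ℕ} (hn4 : 4 ≤ n) (ω : Multiset ℕ)
    (hsum : ω.sum = n) (hparts : ∀ x ∈ ω, 0 < x ∧ x ≤ n - 2) :
    (if Odd n then 2 * mCF (n - 1) * mCF (n - 2) else mCF (n - 1) * mCF (n - 2)) ∣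
      mult ω * Pprod ω := by
  by_cases hOdd : Odd n
  · rw [if_pos hOdd]
    have hnm2 : n % 2 = 1 := Nat.odd_iff.mp hOdd
    -- the factor mCF (n-1)
    have hm1 : mCF (n - 1) ∣ mult ω ∧ mCF (n - 1) % 2 = 1 := by
      by_cases hA : ∃ p : ℕ, p.Prime ∧ ∃ s : ℕ, 0 < s ∧ (n - 1) + 1 = p ^ s
      · obtain ⟨p, hp, s, hs, hps⟩ := hA
        have hnp : n = p ^ s := by omega
        rw [mCF_eq hp hs hps]
        refine ⟨lowA hp hnp (by omega) ω hsum hparts, ?_⟩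
        have hpdvd : p ∣ n := hnp ▸ dvd_pow_self p hs.ne'
        rcases Nat.even_or_odd p with he | ho
        · exfalso
          have h2n : (2:ℕ) ∣ n := he.two_dvd.trans hpdvd
          omega
        · exact Nat.odd_iff.mp ho
      · rw [mCF_eq_one hA]
        exact ⟨one_dvd _, rfl⟩
    have hm2 : (2 * mCF (n - 2)) ∣ mult ω * Pprod ω ∧
        (mCF (n - 2) = 1 ∨ mCF (n - 2) = 2) := by
      by_cases hB : ∃ p : ℕ, p.Prime ∧ ∃ s : ℕ, 0 < s ∧ (n - 2) + 1 = p ^ s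
      · obtain ⟨p, hp, s, hs, hps⟩ := hB
        have hn1 : n - 1 = p ^ s := by omega
        have hp2 : p = 2 := by
          rcases Nat.even_or_odd p with he | ho
          · exact (Nat.Prime.even_iff hp).mp he
          · exfalso
            have hops : Odd (p ^ s) := ho.pow
            obtain ⟨a, ha⟩ := hops
            omega
        subst hp2
        rw [mCF_eq hp hs hps]
        have hs2 : 2 ≤ s := by
          match s, hs with
          | 1, _ => simp at hn1; omega
          | (m+2), _ => omega
        refine ⟨?_, Or.inr rfl⟩
        have hneq : n = 2 ^ s + 1 := by omega
        have := lowD hs2 hneq ω hsum hparts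
        simpa using this
      · rw [mCF_eq_one hB, mul_one]
        exact ⟨(two_dvd_P (by omega)).mul_left _, Or.inl rfl⟩
    have hco : Nat.Coprime (2 * mCF (n - 2)) (mCF (n - 1)) := by
      have hc2 : Nat.Coprime 2 (mCF (n - 1)) := by
        exact Nat.coprime_two_left.mpr (Nat.odd_iff.mpr hm1.2)
      rcases hm2.2 with h | h
      · rw [h, mul_one]; exact hc2
      · rw [h]
        have : (2 * 2 : ℕ) = 2 ^ 2 := rfl
        rw [this]
        exact Nat.Coprime.pow_left _ hc2
    have hdvd := Nat.Coprime.mul_dvd_of_dvd_of_dvd hco hm2.1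
      (dvd_mul_of_dvd_left hm1.1 _)
    have heq : 2 * mCF (n - 1) * mCF (n - 2) = 2 * mCF (n - 2) * mCF (n - 1) := by ring
    rw [heq]
    exact hdvd
  · rw [if_neg hOdd]
    have hnm2 : n % 2 = 0 := Nat.even_iff.mp (Nat.not_odd_iff_even.mp hOdd)
    have hm1 : mCF (n - 1) ∣ mult ω ∧ (mCF (n - 1) = 1 ∨ mCF (n - 1) = 2) := by
      by_cases hA : ∃ p : ℕ, p.Prime ∧ ∃ s : ℕ, 0 < s ∧ (n - 1) + 1 = p ^ s
      · obtain ⟨p, hp, s, hs, hps⟩ := hA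
        have hnp : n = p ^ s := by omega
        have hp2 : p = 2 := by
          rcases Nat.even_or_odd p with he | ho
          · exact (Nat.Prime.even_iff hp).mp he
          · exfalso
            have hops : Odd (p ^ s) := ho.pow
            obtain ⟨a, ha⟩ := hops
            omega
        subst hp2
        rw [mCF_eq hp hs hps]
        exact ⟨lowA hp hnp (by omega) ω hsum hparts, Or.inr rfl⟩
      · rw [mCF_eq_one hA]
        exact ⟨one_dvd _, Or.inl rfl⟩
    have hm2 : mCF (n - 2) ∣ mult ω ∧ mCF (n - 2) % 2 = 1 := by
      by_cases hB : ∃ p : ℕ, p.Prime ∧ ∃ s : ℕ, 0 < s ∧ (n - 2) + 1 = p ^ s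
      · obtain ⟨p, hp, s, hs, hps⟩ := hB
        have hn1 : n - 1 = p ^ s := by omega
        rw [mCF_eq hp hs hps]
        refine ⟨lowB hp hs hn1 hn4 ω hsum hparts, ?_⟩
        rcases Nat.even_or_odd p with he | ho
        · exfalso
          have h2ps : (2:ℕ) ∣ p ^ s := dvd_pow he.two_dvd hs.ne'
          omega
        · exact Nat.odd_iff.mp ho
      · rw [mCF_eq_one hB]
        exact ⟨one_dvd _, rfl⟩
    have hco : Nat.Coprime (mCF (n - 1)) (mCF (n - 2)) := by
      rcases hm1.2 with h | h
      · rw [h]; exact Nat.coprime_one_left _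
      · rw [h]
        exact Nat.coprime_two_left.mpr (Nat.odd_iff.mpr hm2.2)
    exact dvd_mul_of_dvd_left (Nat.Coprime.mul_dvd_of_dvd_of_dvd hco hm1.1 hm2.1) _


lemma Pprod_cons (x : ℕ) (t : Multiset ℕ) : Pprod (x ::ₘ t) = (x + 1) ^ x * Pprod t := by
  simp [Pprod]

lemma mult_singleton (a : ℕ) : mult {a} = 1 := by
  have : Ffac {a} = a ! := by simp [Ffac]
  rw [mult, this]
  have : ({a} : Multiset ℕ).sum = a := by simp
  rw [this, Nat.div_self (factorial_pos a)]

lemma not_dvd_Pprod {p : ℕ} (hp : p.Prime) {ω : Multiset ℕ} (h : ∀ x ∈ ω, ¬ p ∣ x + 1) :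
    ¬ p ∣ Pprod ω := by
  intro hdvd
  obtain ⟨a, ha, hpa⟩ := hp.prime.exists_mem_multiset_dvd hdvd
  obtain ⟨x, hx, rfl⟩ := Multiset.mem_map.mp ha
  exact h x hx (hp.dvd_of_dvd_pow hpa)

lemma eq_single_one {s : Multiset ℕ} (hpos : ∀ x ∈ s, 0 < x) (h : s.sum = 1) : s = {1} := by
  have hne : s ≠ 0 := by rintro rfl; simp at h
  obtain ⟨a, ha⟩ := Multiset.exists_mem_of_ne_zero hne
  obtain ⟨t, rfl⟩ := Multiset.exists_cons_of_mem ha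
  rw [Multiset.sum_cons] at h
  have ha1 : a = 1 := by
    have := hpos a (Multiset.mem_cons_self a t)
    have htpos : 0 ≤ t.sum := Nat.zero_le _
    omega
  have ht0 : t.sum = 0 := by omega
  have : t = 0 := by
    by_contra htne
    obtain ⟨x, hx⟩ := Multiset.exists_mem_of_ne_zero htne
    have hxpos := hpos x (Multiset.mem_cons_of_mem hx)
    have : x ≤ t.sum := Multiset.single_le_sum (fun y _ => Nat.zero_le y) x hx
    omega
  rw [ha1, this]
  rfl

/-- key part-size bound: if some other mass ≥ 2 remains, each part is ≤ n - 2. -/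
lemma part_le_sub_two {ω : Multiset ℕ} {n x : ℕ} (hsum : ω.sum = n)
    (hpos : ∀ y ∈ ω, 0 < y) (hx : x ∈ ω)
    (h0 : ω ≠ {x}) (h1 : ω.erase x ≠ {1}) : x ≤ n - 2 := by
  obtain ⟨t, ht⟩ := Multiset.exists_cons_of_mem hx
  have hte : ω.erase x = t := by rw [ht, Multiset.erase_cons_head]
  have hsum' : x + t.sum = n := by rw [ht, Multiset.sum_cons] at hsum; exact hsum
  have htpos : ∀ y ∈ t, 0 < y := fun y hy => hpos y (ht ▸ Multiset.mem_cons_of_mem hy)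
  by_contra hcon
  push_neg at hcon
  have h2 : t.sum ≤ 1 := by omega
  interval_cases hts : t.sum
  · -- t.sum = 0 : t = 0, so ω = {x}
    have : t = 0 := by
      by_contra htne
      obtain ⟨y, hy⟩ := Multiset.exists_mem_of_ne_zero htne
      have := htpos y hy
      have : y ≤ t.sum := Multiset.single_le_sum (fun z _ => Nat.zero_le z) y hy
      omega
    exact h0 (by rw [ht, this]; rfl)
  · exact h1 (hte ▸ eq_single_one htpos hts)


lemma not_dvd_mult_Dp {p : ℕ} (hp : p.Prime) (n : ℕ) : ¬ p ∣ mult (Dp p n) := by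
  haveI : Fact p.Prime := ⟨hp⟩
  intro h
  have := one_le_padicValNat_of_dvd (mult_pos _).ne' h
  rw [Dp_mult_val p hp n] at this
  omega

lemma upper_digit {p n : ℕ} (hp : p.Prime) (hpn : p ≤ n) (hn4 : 4 ≤ n)
    (hA : ¬∃ s, 0 < s ∧ n = p ^ s) (hB : ¬∃ s, 0 < s ∧ n - 1 = p ^ s)
    (hodd : p % 2 = 1 ∨ n % p = 0) :
    ∃ ω : Multiset ℕ, ω.sum = n ∧ (∀ x ∈ ω, 0 < x ∧ x ≤ n - 2) ∧
      ¬ p ∣ mult ω * Pprod ω := by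
  have hp2 := hp.two_le
  refine ⟨Dp p n, Dp_sum p hp2 n, ?_, ?_⟩
  · intro x hx
    refine ⟨Dp_pos_mem p hp2 n x hx, ?_⟩
    apply part_le_sub_two (Dp_sum p hp2 n) (fun y hy => Dp_pos_mem p hp2 n y hy) hx
    · -- Dp p n ≠ {x}
      intro hcon
      obtain ⟨j, hj⟩ := Dp_mem p hp2 n x hx
      have : n = x := by rw [← Dp_sum p hp2 n, hcon]; simp
      apply hA
      refine ⟨j, ?_, by omega⟩
      rcases Nat.eq_zero_or_pos j with rfl | hj0
      · exfalso; simp at hj; omega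
      · exact hj0
    · -- (Dp p n).erase x ≠ {1}
      intro hcon
      obtain ⟨j, hj⟩ := Dp_mem p hp2 n x hx
      have hsum2 : x + ((Dp p n).erase x).sum = n := by
        have hce := congrArg Multiset.sum (Multiset.cons_erase hx)
        rw [Multiset.sum_cons] at hce
        rw [hce, Dp_sum p hp2 n]
      rw [hcon] at hsum2
      simp at hsum2
      -- x = n - 1 = p ^ j
      apply hB
      refine ⟨j, ?_, by omega⟩
      rcases Nat.eq_zero_or_pos j with rfl | hj0
      · exfalso; simp at hj; omega
      · exact hj0
  · intro hdvd
    rcases (Nat.Prime.dvd_mul hp).mp hdvd with h | h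
    · exact not_dvd_mult_Dp hp n h
    · obtain ⟨a, ha, hpa⟩ := hp.prime.exists_mem_multiset_dvd h
      obtain ⟨x, hx, rfl⟩ := Multiset.mem_map.mp ha
      have hdx1 : p ∣ x + 1 := hp.dvd_of_dvd_pow hpa
      obtain ⟨j, rfl⟩ := Dp_mem p hp2 n x hx
      rcases Nat.eq_zero_or_pos j with rfl | hj0
      · -- part 1 : p ∣ 2
        simp at hdx1
        have hple : p ≤ 2 := Nat.le_of_dvd (by norm_num) hdx1
        have : p = 2 := by omega
        subst this
        rcases hodd with h1 | h2
        · omega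
        · exact Dp_one_not_mem 2 (by norm_num) n h2 (by simpa using hx)
      · have : p ∣ 1 := (Nat.dvd_add_right (dvd_pow_self p hj0.ne')).mp hdx1
        exact hp.one_lt.ne' (Nat.eq_one_of_dvd_one this ▸ rfl)

lemma upper_all_ones {p n : ℕ} (hp : p.Prime) (hnp : n < p) (hn3 : 3 ≤ n) :
    ∃ ω : Multiset ℕ, ω.sum = n ∧ (∀ x ∈ ω, 0 < x ∧ x ≤ n - 2) ∧
      ¬ p ∣ mult ω * Pprod ω := by
  refine ⟨Multiset.replicate n 1, by simp, ?_, ?_⟩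
  · intro x hx
    have := Multiset.eq_of_mem_replicate hx
    omega
  · have hF : Ffac (Multiset.replicate n 1) = 1 := by
      simp [Ffac, Multiset.map_replicate]
    have hm : mult (Multiset.replicate n 1) = n ! := by
      rw [mult, hF, Nat.div_one]
      simp
    have hP : Pprod (Multiset.replicate n 1) = 2 ^ n := by
      simp [Pprod, Multiset.map_replicate]
    rw [hm, hP]
    intro hdvd
    rcases (Nat.Prime.dvd_mul hp).mp hdvd with h | h
    · exact absurd ((Nat.Prime.dvd_factorial hp).mp h) (by omega)
    · have := hp.dvd_of_dvd_pow h
      have : p ≤ 2 := Nat.le_of_dvd (by norm_num) this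
      omega


lemma upper_two_odd {n : ℕ} (hn : n % 2 = 1) (hn4 : 4 ≤ n)
    (hB : ¬∃ s, 0 < s ∧ n - 1 = 2 ^ s) :
    ∃ ω : Multiset ℕ, ω.sum = n ∧ (∀ x ∈ ω, 0 < x ∧ x ≤ n - 2) ∧
      padicValNat 2 (mult ω * Pprod ω) = 1 := by
  haveI : Fact (Nat.Prime 2) := ⟨Nat.prime_two⟩
  have hn5 : 5 ≤ n := by omega
  refine ⟨1 ::ₘ Dp 2 (n - 1), ?_, ?_, ?_⟩
  · rw [Multiset.sum_cons, Dp_sum 2 (by norm_num) (n - 1)]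
    omega
  · intro x hx
    rcases Multiset.mem_cons.mp hx with rfl | hx'
    · omega
    · refine ⟨Dp_pos_mem 2 (by norm_num) (n - 1) x hx', ?_⟩
      -- x ≤ n - 2, i.e. x ≠ n - 1 among parts of Dp 2 (n-1)
      have hxle : x ≤ n - 1 := by
        rw [← Dp_sum 2 (by norm_num) (n - 1)]
        exact Multiset.single_le_sum (fun z _ => Nat.zero_le z) x hx'
      rcases Nat.lt_or_ge x (n - 1) with h | h
      · omega
      · exfalso
        have hxeq : x = n - 1 := by omega
        -- then Dp 2 (n-1) = {x} and n-1 = 2^j with j ≥ 1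
        have hsum2 : x + ((Dp 2 (n - 1)).erase x).sum = n - 1 := by
          have hce := congrArg Multiset.sum (Multiset.cons_erase hx')
          rw [Multiset.sum_cons] at hce
          rw [hce, Dp_sum 2 (by norm_num) (n - 1)]
        have herase0 : ((Dp 2 (n - 1)).erase x).sum = 0 := by omega
        obtain ⟨j, hj⟩ := Dp_mem 2 (by norm_num) (n - 1) x hx'
        apply hB
        refine ⟨j, ?_, by omega⟩
        rcases Nat.eq_zero_or_pos j with rfl | hj0
        · exfalso; simp at hj; omega
        · exact hj0
  · have hsD : (Dp 2 (n - 1)).sum = n - 1 := Dp_sum 2 (by norm_num) (n - 1)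
    rw [mult_cons, Pprod_cons, hsD]
    have hnD1 : 1 ∉ Dp 2 (n - 1) := Dp_one_not_mem 2 (by norm_num) (n - 1) (by omega)
    have hPD : ¬ (2:ℕ) ∣ Pprod (Dp 2 (n - 1)) := by
      apply not_dvd_Pprod Nat.prime_two
      intro x hx h2x
      obtain ⟨j, rfl⟩ := Dp_mem 2 (by norm_num) (n - 1) x hx
      rcases Nat.eq_zero_or_pos j with rfl | hj0
      · exact hnD1 (by simpa using hx)
      · have : (2:ℕ) ∣ 1 := (Nat.dvd_add_right (dvd_pow_self 2 hj0.ne')).mp h2x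
        omega
    have hch : (1 + (n - 1)).choose 1 = n := by
      rw [Nat.choose_one_right]
      omega
    rw [hch]
    have hPpos := Pprod_pos (Dp 2 (n - 1)) (fun x hx => Dp_pos_mem 2 (by norm_num) (n - 1) x hx)
    rw [padicValNat.mul (Nat.mul_pos (by omega : 0 < n) (mult_pos _)).ne'
        (Nat.mul_pos (by norm_num : 0 < (1+1)^1) hPpos).ne',
      padicValNat.mul (by omega : n ≠ 0) (mult_pos _).ne',
      padicValNat.mul (by norm_num : ((1+1)^1 : ℕ) ≠ 0) hPpos.ne']
    have h1 : padicValNat 2 n = 0 := padicValNat.eq_zero_of_not_dvd (by omega)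
    have h2 : padicValNat 2 (mult (Dp 2 (n - 1))) = 0 := Dp_mult_val 2 Nat.prime_two (n - 1)
    have h3 : padicValNat 2 ((1 + 1) ^ 1) = 1 := by
      norm_num
    have h4 : padicValNat 2 (Pprod (Dp 2 (n - 1))) = 0 := padicValNat.eq_zero_of_not_dvd hPD
    omega


lemma val_choose_p2 {p : ℕ} (hp : p.Prime) (hp5 : 5 ≤ p) :
    padicValNat p (p.choose 2) = 1 := by
  haveI : Fact p.Prime := ⟨hp⟩
  have hkey : p.choose 2 * 2 = p * (p - 1) := by
    rw [Nat.choose_two_right]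
    apply Nat.div_mul_cancel
    exact (Nat.even_mul_pred_self p).two_dvd
  have h2 := congrArg (padicValNat p) hkey
  rw [padicValNat.mul (Nat.choose_pos (by omega : 2 ≤ p)).ne' (by norm_num),
      padicValNat.mul (by omega : p ≠ 0) (by omega : p - 1 ≠ 0)] at h2
  have hv2 : padicValNat p 2 = 0 := padicValNat.eq_zero_of_not_dvd (by
    intro h; have := Nat.le_of_dvd (by norm_num) h; omega)
  have hvp : padicValNat p p = 1 := padicValNat_self
  have hvp1 : padicValNat p (p - 1) = 0 := padicValNat.eq_zero_of_not_dvd (by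
    intro h; have := Nat.le_of_dvd (by omega) h; omega)
  omega

lemma val_unit {p x : ℕ} (hx : ¬ p ∣ x) : padicValNat p x = 0 :=
  padicValNat.eq_zero_of_not_dvd hx

lemma upper_A {p s n : ℕ} (hp : p.Prime) (hs : 0 < s) (hn : n = p ^ s) (hn4 : 4 ≤ n) :
    ∃ ω : Multiset ℕ, ω.sum = n ∧ (∀ x ∈ ω, 0 < x ∧ x ≤ n - 2) ∧
      padicValNat p (mult ω * Pprod ω) = 1 := by
  haveI : Fact p.Prime := ⟨hp⟩
  by_cases hs1 : s = 1
  · subst hs1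
    rw [pow_one] at hn
    have hne4 : p ≠ 4 := fun h => absurd (h ▸ hp) (by norm_num)
    have hp2' := hp.two_le
    have hpne : ¬ Nat.Prime 4 := by norm_num
    have hp5 : 5 ≤ p := by
      rcases Nat.lt_or_ge p 5 with h | h
      · interval_cases p <;> first | (exfalso; omega) | (exfalso; revert hp; norm_num) | rfl
      · exact h
    refine ⟨2 ::ₘ {p - 2}, ?_, ?_, ?_⟩
    · rw [Multiset.sum_cons]
      simp
      omega
    · intro x hx
      rcases Multiset.mem_cons.mp hx with rfl | hx'
      · omega
      · rw [Multiset.mem_singleton.mp hx']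
        omega
    · rw [mult_cons, Pprod_cons]
      have hss : ({p - 2} : Multiset ℕ).sum = p - 2 := by simp
      rw [hss, mult_singleton, mul_one]
      have hch : (2 + (p - 2)).choose 2 = p.choose 2 := by
        congr 1
        omega
      rw [hch]
      have hPs : Pprod {p - 2} = (p - 2 + 1) ^ (p - 2) := by
        show Pprod ((p-2) ::ₘ 0) = _
        rw [Pprod_cons]
        simp [Pprod]
      have hP : ¬ p ∣ (2 + 1) ^ 2 * Pprod {p - 2} := by
        intro h
        rcases (Nat.Prime.dvd_mul hp).mp h with h' | h'
        · have := hp.dvd_of_dvd_pow h'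
          have := Nat.le_of_dvd (by norm_num) this
          omega
        · rw [hPs] at h'
          have := hp.dvd_of_dvd_pow h'
          have := Nat.le_of_dvd (by omega) this
          omega
      have hPpos : 0 < (2 + 1) ^ 2 * Pprod {p - 2} := by
        rw [hPs]
        positivity
      rw [padicValNat.mul (Nat.choose_pos (by omega : 2 ≤ p)).ne' hPpos.ne',
        val_choose_p2 hp hp5, val_unit hP]
  · have hs2 : 2 ≤ s := by omega
    have hple : p ^ (s - 1) ≤ p ^ s := Nat.pow_le_pow_right hp.pos (by omega)
    have hplt : p ^ (s - 1) < p ^ s := Nat.pow_lt_pow_right hp.one_lt (by omega)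
    have hpb2 : 2 ≤ p ^ (s - 1) := by
      calc 2 ≤ p := hp.two_le
      _ = p ^ 1 := (pow_one p).symm
      _ ≤ p ^ (s - 1) := Nat.pow_le_pow_right hp.pos (by omega)
    have hpdvd1 : p ∣ p ^ (s - 1) := dvd_pow_self p (by omega)
    have hpdvda : p ∣ p ^ s - p ^ (s - 1) := Nat.dvd_sub (dvd_pow_self p hs.ne') hpdvd1
    -- the sum is 2 p^{s-1} ≤ p^s so both parts ≤ n - 2
    have h2ps : 2 * p ^ (s - 1) ≤ p ^ s := by
      calc 2 * p ^ (s - 1) ≤ p * p ^ (s - 1) := Nat.mul_le_mul_right _ hp.two_le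
      _ = p ^ s := by rw [mul_comm, ← pow_succ]; congr 1; omega
    refine ⟨(p ^ s - p ^ (s - 1)) ::ₘ {p ^ (s - 1)}, ?_, ?_, ?_⟩
    · rw [Multiset.sum_cons]
      simp
      omega
    · intro x hx
      rcases Multiset.mem_cons.mp hx with rfl | hx'
      · omega
      · rw [Multiset.mem_singleton.mp hx']
        omega
    · rw [mult_cons, Pprod_cons]
      have hss : ({p ^ (s - 1)} : Multiset ℕ).sum = p ^ (s - 1) := by simp
      rw [hss, mult_singleton, mul_one]
      have hch : (p ^ s - p ^ (s - 1) + p ^ (s - 1)).choose (p ^ s - p ^ (s - 1)) =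
          (p ^ s).choose (p ^ (s - 1)) := by
        have h1 : p ^ s - p ^ (s - 1) + p ^ (s - 1) = p ^ s := by omega
        rw [h1, ← Nat.choose_symm hple]
      rw [hch]
      have hPs : Pprod {p ^ (s - 1)} = (p ^ (s - 1) + 1) ^ (p ^ (s - 1)) := by
        show Pprod ((p ^ (s - 1)) ::ₘ 0) = _
        rw [Pprod_cons]
        simp [Pprod]
      have hP : ¬ p ∣ (p ^ s - p ^ (s - 1) + 1) ^ (p ^ s - p ^ (s - 1)) * Pprod {p ^ (s - 1)} := by
        intro h
        rcases (Nat.Prime.dvd_mul hp).mp h with h' | h'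
        · have h2 := hp.dvd_of_dvd_pow h'
          have : p ∣ 1 := (Nat.dvd_add_right hpdvda).mp h2
          have := Nat.le_of_dvd (by norm_num) this
          have := hp.two_le
          omega
        · rw [hPs] at h'
          have h2 := hp.dvd_of_dvd_pow h'
          have : p ∣ 1 := (Nat.dvd_add_right hpdvd1).mp h2
          have := Nat.le_of_dvd (by norm_num) this
          have := hp.two_le
          omega
      have hPpos : 0 < (p ^ s - p ^ (s - 1) + 1) ^ (p ^ s - p ^ (s - 1)) * Pprod {p ^ (s - 1)} := by
        rw [hPs]
        positivity
      rw [padicValNat.mul (Nat.choose_pos hple).ne' hPpos.ne',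
        val_unit hP, val_choose_pow p hp s hs]


lemma upper_B {p s n : ℕ} (hp : p.Prime) (hs : 0 < s) (hn : n - 1 = p ^ s) (hn4 : 4 ≤ n)
    (hps4 : 4 ≤ p ^ s) :
    ∃ ω : Multiset ℕ, ω.sum = n ∧ (∀ x ∈ ω, 0 < x ∧ x ≤ n - 2) ∧
      padicValNat p (mult ω * Pprod ω) = 1 + padicValNat p 2 := by
  haveI : Fact p.Prime := ⟨hp⟩
  obtain ⟨ω', h1, h2, h3⟩ := upper_A hp hs rfl hps4
  have hneq : n = p ^ s + 1 := by omega
  refine ⟨1 ::ₘ ω', ?_, ?_, ?_⟩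
  · rw [Multiset.sum_cons, h1]
    omega
  · intro x hx
    rcases Multiset.mem_cons.mp hx with rfl | hx'
    · exact ⟨one_pos, by omega⟩
    · have := h2 x hx'
      omega
  · rw [mult_cons, Pprod_cons, h1]
    have hch : (1 + p ^ s).choose 1 = n := by rw [Nat.choose_one_right]; omega
    rw [hch]
    have hvn : padicValNat p n = 0 := by
      apply val_unit
      intro h
      rw [hneq] at h
      have hdp : p ∣ p ^ s := dvd_pow_self p hs.ne'
      have h1' : p ∣ 1 := (Nat.dvd_add_right hdp).mp h
      have := Nat.le_of_dvd one_pos h1'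
      have := hp.two_le
      omega
    have hmpos := mult_pos ω'
    have hPpos : 0 < Pprod ω' := Pprod_pos ω' (fun x hx => (h2 x hx).1)
    have hsplit : padicValNat p (mult ω') + padicValNat p (Pprod ω') = 1 := by
      rw [← padicValNat.mul hmpos.ne' hPpos.ne', h3]
    rw [padicValNat.mul (Nat.mul_pos (by omega : 0 < n) hmpos).ne'
        (Nat.mul_pos (by norm_num : 0 < (1+1)^1) hPpos).ne',
      padicValNat.mul (by omega : n ≠ 0) hmpos.ne',
      padicValNat.mul (by norm_num : ((1+1)^1:ℕ) ≠ 0) hPpos.ne']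
    have h21 : ((1+1)^1 : ℕ) = 2 := by norm_num
    rw [h21, hvn]
    omega

lemma upper_n4 :
    ∃ ω : Multiset ℕ, ω.sum = 4 ∧ (∀ x ∈ ω, 0 < x ∧ x ≤ 4 - 2) ∧
      padicValNat 3 (mult ω * Pprod ω) = 1 := by
  haveI : Fact (Nat.Prime 3) := ⟨by norm_num⟩
  refine ⟨Multiset.replicate 4 1, by simp, ?_, ?_⟩
  · intro x hx
    have := Multiset.eq_of_mem_replicate hx
    omega
  · have hF : Ffac (Multiset.replicate 4 1) = 1 := by
      simp [Ffac, Multiset.map_replicate]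
    have hm : mult (Multiset.replicate 4 1) = 24 := by
      rw [mult, hF, Nat.div_one]
      simp
      rfl
    have hP : Pprod (Multiset.replicate 4 1) = 16 := by
      simp [Pprod, Multiset.map_replicate]
    rw [hm, hP]
    have : (24 * 16 : ℕ) = 3 * 128 := by norm_num
    rw [this, padicValNat.mul (by norm_num) (by norm_num), padicValNat_self,
      val_unit (by norm_num : ¬ (3:ℕ) ∣ 128)]

end GcdAlpha

open GcdAlpha

/-- The gcd over all partitions `ω` of `n` with parts of size at most `n - 2` of the
numbers `α(ω) = (n! / ∏ i_j!) · ∏ (i_j + 1)^{i_j}` equals `g(n)`, where `g(3) = 48`,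
`g(n) = 2·m(n-1)·m(n-2)` for odd `n > 3` and `g(n) = m(n-1)·m(n-2)` for even `n > 3`. -/
theorem gcd_alpha_partitions (n : ℕ) (hn : 3 ≤ n)
    (g : ℕ)
    (hg : g = if n = 3 then 48
      else if Odd n then 2 * mCF (n - 1) * mCF (n - 2)
      else mCF (n - 1) * mCF (n - 2))
    (α : Multiset ℕ → ℕ)
    (hα : ∀ ω : Multiset ℕ,
      α ω = (Nat.factorial n / (ω.map Nat.factorial).prod) *
        (ω.map (fun i => (i + 1) ^ i)).prod) :
    (∀ ω : Multiset ℕ, ω.sum = n → (∀ x ∈ ω, 0 < x ∧ x ≤ n - 2) → g ∣ α ω) ∧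
    (∀ d : ℕ, (∀ ω : Multiset ℕ, ω.sum = n → (∀ x ∈ ω, 0 < x ∧ x ≤ n - 2) → d ∣ α ω) →
      d ∣ g) := by
  have halpha : ∀ ω : Multiset ℕ, ω.sum = n → α ω = mult ω * Pprod ω := by
    intro ω h
    rw [hα ω]
    unfold GcdAlpha.mult GcdAlpha.Ffac GcdAlpha.Pprod
    rw [h]
  by_cases hn3 : n = 3
  · -- the only valid partition is {1,1,1} and α = 48 = g
    subst hn3
    have hval : ∀ ω : Multiset ℕ, ω.sum = 3 → (∀ x ∈ ω, 0 < x ∧ x ≤ 3 - 2) →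
        α ω = 48 := by
      intro ω hsum hparts
      have hall : ∀ x ∈ ω, x = 1 := by
        intro x hx
        have := hparts x hx
        omega
      have hω : ω = Multiset.replicate (Multiset.card ω) 1 :=
        Multiset.eq_replicate_card.mpr hall
      have hcard : Multiset.card ω = 3 := by
        rw [hω, Multiset.sum_replicate] at hsum
        simpa using hsum
      rw [hcard] at hω
      rw [hω, hα]
      simp [Multiset.map_replicate]
      rfl
    have hgeq : g = 48 := by rw [hg, if_pos rfl]
    constructor
    · intro ω hsum hparts
      rw [hval ω hsum hparts, hgeq]
    · intro d hd
      have h1 := hd (Multiset.replicate 3 1) (by simp) (by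
        intro x hx
        have := Multiset.eq_of_mem_replicate hx
        omega)
      rw [hval _ (by simp) (by
        intro x hx
        have := Multiset.eq_of_mem_replicate hx
        omega)] at h1
      rw [hgeq]
      exact h1
  · have hn4 : 4 ≤ n := by omega
    have hgeq : g = if Odd n then 2 * mCF (n - 1) * mCF (n - 2)
        else mCF (n - 1) * mCF (n - 2) := by rw [hg, if_neg hn3]
    constructor
    · intro ω hsum hparts
      rw [halpha ω hsum, hgeq]
      exact lower hn4 ω hsum hparts
    · intro d hd
      rw [Nat.dvd_iff_prime_pow_dvd_dvd]
      intro p k hpp hpkd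
      have hp : p.Prime := hpp
      haveI : Fact p.Prime := ⟨hp⟩
      rcases Nat.eq_zero_or_pos k with rfl | hk
      · simpa using one_dvd g
      have hdall : ∀ ω : Multiset ℕ, ω.sum = n → (∀ x ∈ ω, 0 < x ∧ x ≤ n - 2) →
          p ^ k ∣ mult ω * Pprod ω := by
        intro ω h1 h2
        have := hd ω h1 h2
        rw [halpha ω h1] at this
        exact hpkd.trans this
      -- from a witness with value v we get k ≤ v
      have hwit : ∀ ω : Multiset ℕ, ω.sum = n → (∀ x ∈ ω, 0 < x ∧ x ≤ n - 2) →
          k ≤ padicValNat p (mult ω * Pprod ω) := by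
        intro ω h1 h2
        have hpos : 0 < mult ω * Pprod ω :=
          Nat.mul_pos (mult_pos ω) (Pprod_pos ω (fun x hx => (h2 x hx).1))
        exact (padicValNat_dvd_iff_le hpos.ne').mp (hdall ω h1 h2)
      have hcontra : ∀ ω : Multiset ℕ, ω.sum = n → (∀ x ∈ ω, 0 < x ∧ x ≤ n - 2) →
          ¬ p ∣ mult ω * Pprod ω → False := by
        intro ω h1 h2 hnd
        exact hnd ((dvd_pow_self p hk.ne').trans (hdall ω h1 h2))
      by_cases hA : ∃ s, 0 < s ∧ n = p ^ s
      · obtain ⟨s, hs, hns⟩ := hA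
        obtain ⟨ω, h1, h2, h3⟩ := upper_A hp hs hns hn4
        have hk1 : k ≤ 1 := h3 ▸ hwit ω h1 h2
        have hm1 : mCF (n - 1) = p := mCF_eq hp hs (by omega)
        have hpg : p ∣ g := by
          rw [hgeq]
          by_cases ho : Odd n
          · rw [if_pos ho, ← hm1]
            exact ⟨2 * mCF (n - 2), by ring⟩
          · rw [if_neg ho, ← hm1]
            exact ⟨mCF (n - 2), by ring⟩
        calc p ^ k ∣ p ^ 1 := pow_dvd_pow p hk1
          _ = p := pow_one p
          _ ∣ g := hpg
      · by_cases hB : ∃ s, 0 < s ∧ n - 1 = p ^ s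
        · obtain ⟨s, hs, hns⟩ := hB
          have hm2 : mCF (n - 2) = p := mCF_eq hp hs (by omega)
          by_cases hps4 : 4 ≤ p ^ s
          · obtain ⟨ω, h1, h2, h3⟩ := upper_B hp hs hns hn4 hps4
            have hk1 : k ≤ 1 + padicValNat p 2 := h3 ▸ hwit ω h1 h2
            by_cases hp2 : p = 2
            · subst hp2
              have hv2 : padicValNat 2 2 = 1 := padicValNat_self
              have hodd : Odd n := by
                have h2s : (2:ℕ) ∣ 2 ^ s := dvd_pow_self 2 hs.ne'
                rw [Nat.odd_iff]
                omega
              have h4g : (4:ℕ) ∣ g := by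
                rw [hgeq, if_pos hodd, hm2]
                exact ⟨mCF (n - 1), by ring⟩
              calc (2:ℕ) ^ k ∣ 2 ^ 2 := pow_dvd_pow 2 (by omega)
                _ = 4 := by norm_num
                _ ∣ g := h4g
            · have hpodd : ¬ (p ∣ 2) := by
                intro h
                have := Nat.le_of_dvd (by norm_num) h
                have := hp.two_le
                omega
              have hv2 : padicValNat p 2 = 0 := val_unit hpodd
              have hnev : ¬ Odd n := by
                have hpodd' : Odd p := hp.odd_of_ne_two hp2
                have hops : Odd (p ^ s) := hpodd'.pow
                have h1' : p ^ s % 2 = 1 := Nat.odd_iff.mp hops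
                rw [Nat.odd_iff]
                omega
              have hpg : p ∣ g := by
                rw [hgeq, if_neg hnev, hm2]
                exact dvd_mul_left p (mCF (n - 1))
              calc p ^ k ∣ p ^ 1 := pow_dvd_pow p (by omega)
                _ = p := pow_one p
                _ ∣ g := hpg
          · -- p ^ s = 3, so p = 3, s = 1, n = 4
            have hps3 : p ^ s = 3 := by omega
            have hdvd3 : p ∣ 3 := hps3 ▸ dvd_pow_self p hs.ne'
            have hple3 := Nat.le_of_dvd (by norm_num) hdvd3
            have hp2' := hp.two_le
            have hp3 : p = 3 := by
              interval_cases p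
              · exfalso; norm_num at hdvd3
              · rfl
            subst hp3
            have hneq4 : n = 4 := by omega
            subst hneq4
            obtain ⟨ω, h1, h2, h3⟩ := upper_n4
            have hk1 : k ≤ 1 := h3 ▸ hwit ω h1 h2
            have h3g : (3:ℕ) ∣ g := by
              rw [hgeq, if_neg (by decide : ¬ Odd 4), hm2]
              exact dvd_mul_left 3 (mCF (4 - 1))
            calc (3:ℕ) ^ k ∣ 3 ^ 1 := pow_dvd_pow 3 hk1
              _ = 3 := pow_one 3
              _ ∣ g := h3g
        · by_cases hp2 : p = 2
          · subst hp2
            by_cases hno : n % 2 = 1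
            · obtain ⟨ω, h1, h2, h3⟩ := upper_two_odd hno hn4 hB
              have hk1 : k ≤ 1 := h3 ▸ hwit ω h1 h2
              have h2g : (2:ℕ) ∣ g := by
                rw [hgeq, if_pos (Nat.odd_iff.mpr hno)]
                exact ⟨mCF (n - 1) * mCF (n - 2), by ring⟩
              calc (2:ℕ) ^ k ∣ 2 ^ 1 := pow_dvd_pow 2 hk1
                _ = 2 := pow_one 2
                _ ∣ g := h2g
            · obtain ⟨ω, h1, h2, h3⟩ :=
                upper_digit Nat.prime_two (by omega) hn4 hA hB (Or.inr (by omega))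
              exact (hcontra ω h1 h2 h3).elim
          · have hpo : p % 2 = 1 := Nat.odd_iff.mp (hp.odd_of_ne_two hp2)
            by_cases hpn : p ≤ n
            · obtain ⟨ω, h1, h2, h3⟩ := upper_digit hp hpn hn4 hA hB (Or.inl hpo)
              exact (hcontra ω h1 h2 h3).elim
            · obtain ⟨ω, h1, h2, h3⟩ := upper_all_ones (n := n) hp (by omega) (by omega)
              exact (hcontra ω h1 h2 h3).elim
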